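/- Let p be a prime with p ≡ 3 (mod 4). Then the following exact identity of rational numbers holds: ∑_{k=0}^{p-1} C(p−1, k)·(−1)^k·(2^{−k} + 1)·u_k(2,2) = (−1)^{(p+1)/4} / 2^{(p−1)/2}. -/

import Mathlib

/-- The Lucas sequence `u_n(A,B)`. -/
def lucasU (A B : ℤ) : ℕ → ℤ
  | 0 => 0
  | 1 => 1
  | n + 2 => A * lucasU A B (n + 1) - B * lucasU A B n

open Complex Finset

lemma lucasU_closed (k : ℕ) :
    (lucasU 2 2 k : ℂ) * (2 * I) = (1 + I) ^ k - (1 - I) ^ k := by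
  induction k using Nat.twoStepInduction with
  | zero => simp [lucasU]
  | one => simp [lucasU]; ring
  | more n ih1 ih2 =>
    have h : lucasU 2 2 (n + 2) = 2 * lucasU 2 2 (n + 1) - 2 * lucasU 2 2 n := rfl
    rw [h]; push_cast
    linear_combination 2 * ih2 - 2 * ih1 + ((1-I)^n - (1+I)^n) * Complex.I_sq

lemma binom_sum (n : ℕ) (x : ℂ) :
    ∑ k ∈ range (n + 1), (n.choose k : ℂ) * x ^ k = (x + 1) ^ n := by
  rw [add_pow]
  simp [mul_comm]

theorem stmt18 (p : ℕ) (hp : p.Prime) (h4 : p % 4 = 3) :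
    ∑ k ∈ Finset.range p,
        (Nat.choose (p - 1) k : ℚ) * (-1 : ℚ) ^ k * ((2 : ℚ) ^ (-(k : ℤ)) + 1) *
          (lucasU 2 2 k : ℚ) =
      (-1 : ℚ) ^ ((p + 1) / 4) / 2 ^ ((p - 1) / 2) := by
  obtain ⟨j, hj⟩ : ∃ j, p = 4 * j + 3 := ⟨p / 4, by omega⟩
  subst hj
  apply Rat.cast_injective (α := ℂ)
  push_cast
  have hn2 : (4 * j + 3 + 1) / 4 = j + 1 := by omega
  have hn3 : (4 * j + 2) / 2 = 2 * j + 1 := by omega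
  rw [hn2, hn3]
  refine mul_right_cancel₀ (b := 2 * I) (by simp [Complex.I_ne_zero]) ?_
  rw [Finset.sum_mul]
  have hsum : ∀ k ∈ range (4 * j + 3),
      ((4*j+2).choose k : ℂ) * (-1)^k * ((2:ℂ)^(-(k:ℤ)) + 1) * ((lucasU 2 2 k : ℤ) : ℂ) * (2 * I)
        = ((4*j+2).choose k : ℂ) * (-(1+I)/2)^k - ((4*j+2).choose k : ℂ) * (-(1-I)/2)^k
          + (((4*j+2).choose k : ℂ) * (-(1+I))^k - ((4*j+2).choose k : ℂ) * (-(1-I))^k) := by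
    intro k _
    have h := lucasU_closed k
    have h2 : (2:ℂ)^(-(k:ℤ)) = (2⁻¹:ℂ)^k := by
      rw [zpow_neg, zpow_natCast, inv_pow]
    have e1 : (-(1+I)/2 : ℂ)^k = (-1:ℂ)^k * (2⁻¹:ℂ)^k * (1+I)^k := by
      rw [← mul_pow, ← mul_pow]; congr 1; ring
    have e2 : (-(1-I)/2 : ℂ)^k = (-1:ℂ)^k * (2⁻¹:ℂ)^k * (1-I)^k := by
      rw [← mul_pow, ← mul_pow]; congr 1; ring
    have e3 : (-(1+I) : ℂ)^k = (-1:ℂ)^k * (1+I)^k := by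
      rw [← mul_pow]; congr 1; ring
    have e4 : (-(1-I) : ℂ)^k = (-1:ℂ)^k * (1-I)^k := by
      rw [← mul_pow]; congr 1; ring
    rw [h2, e1, e2, e3, e4]
    linear_combination (((4*j+2).choose k : ℂ) * (-1)^k * ((2⁻¹:ℂ)^k + 1)) * h
  have main : ∀ x : ℂ,
      ∑ k ∈ range (4*j+3), ((4*j+2).choose k : ℂ) * x ^ k = (x+1)^(4*j+2) := by
    intro x
    rw [show 4*j+3 = 4*j+2+1 by ring]
    exact binom_sum _ x
  rw [Finset.sum_congr rfl hsum, Finset.sum_add_distrib, Finset.sum_sub_distrib,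
    Finset.sum_sub_distrib, main, main, main, main]
  -- now pure computation
  have step : ∀ x c d : ℂ, x^2 = c → c^2 = d → x^(4*j+2) = d^j * c := by
    intro x c d h1 h2
    rw [show (4*j+2) = 2*(2*j+1) by ring, pow_mul, h1, pow_succ, pow_mul, h2]
  rw [step (-(1+I)/2 + 1) (-(I/2)) (-(4⁻¹))
      (by linear_combination (4⁻¹:ℂ) * Complex.I_sq)
      (by linear_combination (4⁻¹:ℂ) * Complex.I_sq),
    step (-(1-I)/2 + 1) (I/2) (-(4⁻¹))
      (by linear_combination (4⁻¹:ℂ) * Complex.I_sq)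
      (by linear_combination (4⁻¹:ℂ) * Complex.I_sq),
    step (-(1+I) + 1) (-1) 1
      (by linear_combination Complex.I_sq) (by norm_num),
    step (-(1-I) + 1) (-1) 1
      (by linear_combination Complex.I_sq) (by norm_num)]
  rw [neg_pow (4⁻¹:ℂ), inv_pow, pow_succ (-1:ℂ) j, pow_succ, pow_mul]
  have h4j : ((4:ℂ))^j ≠ 0 := pow_ne_zero _ (by norm_num)
  norm_num
  field_simp
  ring
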